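/- Let G be a compact group with normalized Haar measure, K a closed subgroup, ξ: G → G/K the quotient map, and σ the unique G-invariant probability measure on G/K (the pushforward of Haar measure under ξ). A K-right-invariant finite measure μ on G is absolutely continuous with respect to Haar measure with K-right-invariant density H∘ξ if and only if the pushforward measure μ∘ξ⁻¹ on G/K is absolutely continuous with respect to σ with density H. -/

import Mathlib

open MeasureTheory
open scoped ENNReal

/-- Pushing forward a `withDensity` measure whose density factors through the map. -/
lemma aux_map_withDensity {α β : Type*} [MeasurableSpace α] [MeasurableSpace β]
    (μ : Measure α) {e : α → β} (he : Measurable e) {f : β → ℝ≥0∞} (hf : Measurable f)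
    (ρ : α → ℝ≥0∞) (hcomp : ∀ a, ρ a = f (e a)) :
    (μ.withDensity ρ).map e = (μ.map e).withDensity f := by
  ext s hs
  rw [Measure.map_apply he hs, withDensity_apply _ (he hs), withDensity_apply _ hs,
    setLIntegral_map hs hf he]
  exact lintegral_congr fun x => hcomp x

set_option maxHeartbeats 1000000 in
theorem stmt_1 {G : Type*} [Group G] [TopologicalSpace G] [IsTopologicalGroup G]
    [CompactSpace G] [MeasurableSpace G] [BorelSpace G]
    (mG : Measure G) [mG.IsHaarMeasure] [IsProbabilityMeasure mG]
    (K : Subgroup G) (hKc : IsClosed (K : Set G))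
    (μ : Measure G) [IsFiniteMeasure μ]
    (hinv : ∀ k ∈ K, Measure.map (fun g => g * k) μ = μ)
    (σ : Measure (G ⧸ K)) (hσ : σ = mG.map (QuotientGroup.mk : G → G ⧸ K))
    (H : G ⧸ K → ℝ≥0∞) (hH : Measurable H) :
    μ = mG.withDensity (fun g => H (QuotientGroup.mk g)) ↔
      μ.map (QuotientGroup.mk : G → G ⧸ K) = σ.withDensity H := by
  classical
  have hmk : Measurable (QuotientGroup.mk : G → G ⧸ K) := QuotientGroup.measurable_coe
  set ν : Measure G := mG.withDensity (fun g => H (QuotientGroup.mk g)) with hν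
  have hAν : ν.map (QuotientGroup.mk : G → G ⧸ K) = σ.withDensity H := by
    rw [hν, hσ]
    exact aux_map_withDensity mG hmk hH _ (fun a => rfl)
  constructor
  · rintro rfl
    exact hAν
  · intro h
    -- instances
    haveI hLC : LocallyCompactSpace G := inferInstance
    haveI hKcs : CompactSpace K := isCompact_iff_compactSpace.mp hKc.isCompact
    haveI : BorelSpace K := Subtype.borelSpace (K : Set G)
    -- Haar probability measure on K
    set mK : Measure K := Measure.haarMeasure (⊤ : TopologicalSpace.PositiveCompacts K) with hmK
    haveI : IsProbabilityMeasure mK := by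
      constructor
      rw [← TopologicalSpace.PositiveCompacts.coe_top (α := K), hmK,
        Measure.haarMeasure_self]
    -- right invariance of Haar measure on the compact group G
    have hmGr : ∀ g : G, mG.map (fun x => x * g) = mG := by
      intro g
      haveI : IsProbabilityMeasure (mG.map (fun x => x * g)) :=
        Measure.isProbabilityMeasure_map (measurable_mul_const g).aemeasurable
      exact Measure.isHaarMeasure_eq_of_isProbabilityMeasure _ mG
    -- ν is right K-invariant
    have hinvν : ∀ k ∈ K, Measure.map (fun g => g * k) ν = ν := by
      intro k hk
      have h1 : (mG.withDensity (fun g => H (QuotientGroup.mk g))).map (fun x => x * k)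
          = (mG.map (fun x => x * k)).withDensity (fun g => H (QuotientGroup.mk g)) :=
        aux_map_withDensity mG (measurable_mul_const k) (hH.comp hmk) _
          (fun a => show H (QuotientGroup.mk a) = H (QuotientGroup.mk (a * k)) from by
            rw [QuotientGroup.mk_mul_of_mem a hk])
      rw [hν]
      rw [show (Measure.map (fun g => g * k)
          (mG.withDensity (fun g => H (QuotientGroup.mk g)))) =
          (mG.withDensity (fun g => H (QuotientGroup.mk g))).map (fun x => x * k) from rfl,
        h1, hmGr k]
    -- ν is a finite measure
    have hνuniv : ν Set.univ = μ Set.univ := by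
      have h1 : (ν.map (QuotientGroup.mk : G → G ⧸ K)) Set.univ = ν Set.univ := by
        rw [Measure.map_apply hmk MeasurableSet.univ, Set.preimage_univ]
      have h2 : (μ.map (QuotientGroup.mk : G → G ⧸ K)) Set.univ = μ Set.univ := by
        rw [Measure.map_apply hmk MeasurableSet.univ, Set.preimage_univ]
      rw [← h1, hAν, ← h, h2]
    haveI : IsFiniteMeasure ν := ⟨by rw [hνuniv]; exact measure_lt_top μ _⟩
    -- Step 2: equal integrals of continuous functions
    have key2 : ∀ f : G → ℝ, Continuous f → ∫ x, f x ∂μ = ∫ x, f x ∂ν := by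
      intro f hf
      set u : G × K → ℝ := fun p => f (p.1 * (p.2 : G)) with hu_def
      have hu : Continuous u :=
        hf.comp (continuous_fst.mul (continuous_subtype_val.comp continuous_snd))
      have hcs : HasCompactSupport u := HasCompactSupport.of_compactSpace u
      set Φ : G → ℝ := fun g => ∫ k : K, f (g * (k : G)) ∂mK with hΦ_def
      have hΦsm : StronglyMeasurable Φ :=
        (hcs.stronglyMeasurable_of_prod hu).integral_prod_right'
      -- the averaging identity
      have swap : ∀ (m : Measure G) [IsFiniteMeasure m],
          (∀ k ∈ K, Measure.map (fun g => g * k) m = m) →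
          ∫ g, Φ g ∂m = ∫ g, f g ∂m := by
        intro m _ hminv
        have hswap := integral_integral_swap_of_hasCompactSupport
          (f := fun (g : G) (k : K) => f (g * (k : G))) hu hcs (μ := m) (ν := mK)
        have hinner : ∀ k : K, ∫ g, f (g * (k : G)) ∂m = ∫ g, f g ∂m := by
          intro k
          conv_rhs => rw [← hminv (k : G) k.2]
          rw [integral_map (measurable_mul_const (k : G)).aemeasurable
            hf.aestronglyMeasurable]
        calc ∫ g, Φ g ∂m = ∫ k : K, ∫ g, f (g * (k : G)) ∂m ∂mK := hswap
          _ = ∫ _k : K, (∫ g, f g ∂m) ∂mK := by simp_rw [hinner]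
          _ = ∫ g, f g ∂m := by simp
      -- Φ descends to the quotient
      have hΦinv : ∀ (g k : G), k ∈ K → Φ (g * k) = Φ g := by
        intro g k hk
        have e1 : ∀ k' : K, g * k * (k' : G) = g * ((⟨k, hk⟩ * k' : K) : G) := by
          intro k'
          simp [mul_assoc]
        calc Φ (g * k) = ∫ k' : K, f (g * k * (k' : G)) ∂mK := rfl
          _ = ∫ k' : K, f (g * (((⟨k, hk⟩ : K) * k' : K) : G)) ∂mK := by simp_rw [e1]
          _ = ∫ k' : K, f (g * (k' : G)) ∂mK :=
            integral_mul_left_eq_self (fun k' : K => f (g * (k' : G))) (⟨k, hk⟩ : K)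
          _ = Φ g := rfl
      set F : G ⧸ K → ℝ := fun x => Φ x.out with hF_def
      have hF : ∀ g : G, F (QuotientGroup.mk g) = Φ g := by
        intro g
        obtain ⟨k, hk⟩ := QuotientGroup.mk_out_eq_mul K g
        rw [hF_def]
        simp only []
        rw [hk]
        exact hΦinv g (k : G) k.2
      have hFolift : (fun g => F (QuotientGroup.mk g)) = Φ := funext hF
      have hFm : Measurable F := by
        rw [QuotientGroup.measurable_from_quotient]
        show Measurable fun g => F (QuotientGroup.mk g)
        rw [hFolift]
        exact hΦsm.measurable
      have hpush : ∀ (m : Measure G), ∫ g, Φ g ∂m =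
          ∫ x, F x ∂(m.map (QuotientGroup.mk : G → G ⧸ K)) := by
        intro m
        rw [integral_map hmk.aemeasurable hFm.stronglyMeasurable.aestronglyMeasurable,
          hFolift]
      calc ∫ x, f x ∂μ = ∫ g, Φ g ∂μ := (swap μ hinv).symm
        _ = ∫ x, F x ∂(μ.map (QuotientGroup.mk : G → G ⧸ K)) := hpush μ
        _ = ∫ x, F x ∂(ν.map (QuotientGroup.mk : G → G ⧸ K)) := by rw [h, hAν]
        _ = ∫ g, Φ g ∂ν := (hpush ν).symm
        _ = ∫ x, f x ∂ν := swap ν hinvν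
    -- Step 3: equal measures of zero sets
    have key3 : ∀ f : G → ℝ, Continuous f → μ (f ⁻¹' {1}) = ν (f ⁻¹' {1}) := by
      intro f hf
      have hc : MeasurableSet (f ⁻¹' {1}) := (isClosed_singleton.preimage hf).measurableSet
      set w : ℕ → G → ℝ := fun n g => max 0 (1 - n * |f g - 1|) with hw_def
      have hwcont : ∀ n, Continuous (w n) := by
        intro n
        exact continuous_const.max
          (continuous_const.sub (continuous_const.mul ((hf.sub continuous_const).abs)))
      have hwbound : ∀ n g, ‖w n g‖ ≤ 1 := by
        intro n g
        rw [Real.norm_eq_abs, abs_of_nonneg (le_max_left _ _)]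
        apply max_le (by norm_num)
        have : (0:ℝ) ≤ n * |f g - 1| := by positivity
        linarith
      have hwtendsto : ∀ g, Filter.Tendsto (fun n => w n g) Filter.atTop
          (nhds ((f ⁻¹' {1}).indicator (fun _ => (1:ℝ)) g)) := by
        intro g
        by_cases hg : f g = 1
        · have : ∀ n, w n g = 1 := by
            intro n
            simp [hw_def, hg]
          rw [Set.indicator_of_mem (by simpa using hg)]
          simp_rw [this]
          exact tendsto_const_nhds
        · have hd : 0 < |f g - 1| := abs_pos.mpr (sub_ne_zero.mpr hg)
          rw [Set.indicator_of_notMem (by simpa using hg)]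
          apply Filter.Tendsto.congr' _ tendsto_const_nhds
          filter_upwards [Filter.eventually_ge_atTop (Nat.ceil (1 / |f g - 1|))] with n hn
          have h1 : 1 / |f g - 1| ≤ (n : ℝ) := le_trans (Nat.le_ceil _) (by exact_mod_cast hn)
          have h2 : 1 ≤ (n : ℝ) * |f g - 1| := by
            rw [div_le_iff₀ hd] at h1
            linarith
          simp only [hw_def]
          rw [max_eq_left (by linarith)]
      have hDC : ∀ (m : Measure G) [IsFiniteMeasure m],
          Filter.Tendsto (fun n => ∫ g, w n g ∂m) Filter.atTop
            (nhds (∫ g, (f ⁻¹' {1}).indicator (fun _ => (1:ℝ)) g ∂m)) := by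
        intro m _
        apply tendsto_integral_of_dominated_convergence (fun _ => (1:ℝ))
        · exact fun n => (hwcont n).aestronglyMeasurable
        · exact integrable_const 1
        · exact fun n => Filter.Eventually.of_forall (hwbound n)
        · exact Filter.Eventually.of_forall hwtendsto
      have hμlim := hDC μ
      have hνlim := hDC ν
      have hint : ∀ n, ∫ g, w n g ∂μ = ∫ g, w n g ∂ν := fun n => key2 (w n) (hwcont n)
      simp_rw [hint] at hμlim
      have heq : ∫ g, (f ⁻¹' {1}).indicator (fun _ => (1:ℝ)) g ∂μ
          = ∫ g, (f ⁻¹' {1}).indicator (fun _ => (1:ℝ)) g ∂ν :=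
        tendsto_nhds_unique hμlim hνlim
      rw [integral_indicator_const (1:ℝ) hc, integral_indicator_const (1:ℝ) hc,
        smul_eq_mul, smul_eq_mul, mul_one, mul_one] at heq
      exact ENNReal.toReal_eq_toReal_iff' (measure_lt_top μ _).ne (measure_lt_top ν _).ne |>.mp heq
    -- Step 4: inner regularity of mG with respect to zero sets
    have hreg : mG.InnerRegularWRT
        (fun s ↦ ∃ (f : G → ℝ), Continuous f ∧ HasCompactSupport f ∧ s = f ⁻¹' {1})
        (fun s ↦ MeasurableSet s ∧ mG s ≠ ∞) :=
      Measure.innerRegularWRT_preimage_one_hasCompactSupport_measure_ne_top_of_group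
    -- Step 5: ν s ≤ μ s for all measurable s
    have key5 : ∀ s : Set G, MeasurableSet s → ν s ≤ μ s := by
      intro s hs
      apply ENNReal.le_of_forall_pos_le_add
      intro ε hε _
      have hεne : (ε : ℝ≥0∞) ≠ 0 := by exact_mod_cast hε.ne'
      -- absolute continuity of ν with respect to mG, ε-δ form
      have hint_ne_top : ∫⁻ g, H (QuotientGroup.mk g) ∂mG ≠ ∞ := by
        have : ∫⁻ g, H (QuotientGroup.mk g) ∂mG = ν Set.univ := by
          rw [hν, withDensity_apply _ MeasurableSet.univ, Measure.restrict_univ]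
        rw [this, hνuniv]
        exact (measure_lt_top μ _).ne
      obtain ⟨δ₀, hδ₀pos, hδ₀⟩ := exists_pos_setLIntegral_lt_of_measure_lt
        (μ := mG) (f := fun g => H (QuotientGroup.mk g)) hint_ne_top hεne
      set δ : ℝ≥0∞ := min δ₀ 1 with hδdef
      have hδpos : 0 < δ := lt_min hδ₀pos zero_lt_one
      have hδtop : δ ≠ ∞ := ((min_le_right _ _).trans_lt ENNReal.one_lt_top).ne
      have hδ : ∀ t : Set G, mG t < δ →
          ∫⁻ x in t, H (QuotientGroup.mk x) ∂mG < ε :=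
        fun t ht => hδ₀ t (ht.trans_le (min_le_left _ _))
      -- find a zero set c ⊆ s with mG (s \ c) < δ
      obtain ⟨c, hcs, ⟨fc, hfc, -, hcf⟩, hmGc⟩ :
          ∃ c ⊆ s, (∃ (f : G → ℝ), Continuous f ∧ HasCompactSupport f ∧ c = f ⁻¹' {1})
            ∧ mG (s \ c) < δ := by
        by_cases h0 : mG s < δ
        · refine ⟨∅, Set.empty_subset s, ⟨fun _ => 0, continuous_const,
            HasCompactSupport.of_compactSpace _, by simp⟩, ?_⟩
          rw [Set.diff_empty]
          exact h0
        · push_neg at h0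
          have hmGs_ne : mG s ≠ 0 := by
            intro h'
            rw [h'] at h0
            exact absurd (le_antisymm h0 bot_le) hδpos.ne'
          have hlt : mG s - δ < mG s :=
            ENNReal.sub_lt_self (measure_lt_top mG s).ne hmGs_ne hδpos.ne'
          obtain ⟨c, hcs, hczero, hrc⟩ := hreg ⟨hs, (measure_lt_top mG s).ne⟩ _ hlt
          refine ⟨c, hcs, hczero, ?_⟩
          obtain ⟨fc, hfc, -, rfl⟩ := hczero
          have hcmeas : MeasurableSet (fc ⁻¹' {1}) :=
            (isClosed_singleton.preimage hfc).measurableSet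
          rw [measure_diff hcs hcmeas.nullMeasurableSet (measure_lt_top mG _).ne]
          rw [ENNReal.sub_lt_iff_lt_right (measure_lt_top mG _).ne (measure_mono hcs)]
          calc mG s ≤ (mG s - δ) + δ := le_tsub_add
            _ < mG (fc ⁻¹' {1}) + δ := ENNReal.add_lt_add_right hδtop hrc
            _ = δ + mG (fc ⁻¹' {1}) := add_comm _ _
        -- done
      have hcmeas : MeasurableSet c := by
        rw [hcf]
        exact (isClosed_singleton.preimage hfc).measurableSet
      have hsplit : ν s ≤ ν c + ν (s \ c) := by
        calc ν s = ν (c ∪ (s \ c)) := by rw [Set.union_diff_cancel hcs]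
          _ ≤ ν c + ν (s \ c) := measure_union_le _ _
      have hνdiff : ν (s \ c) < ε := by
        rw [hν, withDensity_apply _ (hs.diff hcmeas)]
        exact hδ _ hmGc
      have hνc : ν c = μ c := by
        rw [hcf]
        exact (key3 fc hfc).symm
      calc ν s ≤ ν c + ν (s \ c) := hsplit
        _ ≤ μ c + ε := add_le_add (le_of_eq hνc) hνdiff.le
        _ ≤ μ s + ε := add_le_add_left (measure_mono hcs) _
    -- conclude: μ = ν
    ext s hs
    have h1 : ν s ≤ μ s := key5 s hs
    have h2 : ν sᶜ ≤ μ sᶜ := key5 sᶜ hs.compl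
    have htot : ν s + ν sᶜ = μ s + μ sᶜ := by
      rw [measure_add_measure_compl hs, measure_add_measure_compl hs, hνuniv]
    have hμs : μ s ≤ ν s := by
      by_contra hcon
      push_neg at hcon
      have : ν s + ν sᶜ < μ s + μ sᶜ :=
        ENNReal.add_lt_add_of_lt_of_le (measure_lt_top ν _).ne hcon h2
      exact absurd htot this.ne
    exact le_antisymm hμs h1
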